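/- (Small model property for LPP1.) Let A be an LPP1 formula that is satisfiable, i.e., there exist an LPP1-model M and a world w with M, w ⊨ A. Then A is satisfiable in an LPP1-model M = ⟨U, W, H, μ, v⟩ such that: (1) |U| ≤ 2^{|A|}; (2) for each w ∈ U, W_w = U and H_w = 𝒫(U); (3) for each w ∈ U and every V ⊆ U, μ_w(V) = Σ_{u ∈ V} μ_w({u}). -/

import Mathlib

/-- Rationals in the unit interval `ℚ ∩ [0,1]`. -/
abbrev Prob01 : Type := {s : ℚ // 0 ≤ s ∧ s ≤ 1}

/-- The rational `1` as an element of `ℚ ∩ [0,1]`. -/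
def probOne : Prob01 := ⟨1, by norm_num⟩

/-- The formulas of LPP1 (the iterated probabilistic logic over classical
propositional logic): `A ::= p | ¬A | A ∧ A | P_{≥s} A`, `s ∈ ℚ ∩ [0,1]`. -/
inductive LPP1Form : Type where
  | atom : ℕ → LPP1Form
  | neg : LPP1Form → LPP1Form
  | conj : LPP1Form → LPP1Form → LPP1Form
  | geq : Prob01 → LPP1Form → LPP1Form

/-- An LPP1-model `⟨U, W, H, μ, v⟩` (data part): a nonempty set `U` of worlds and,
for each world `w`, a set `W_w ⊆ U`, a family `H_w` of subsets, a set function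
`μ_w`, and an evaluation `v_w`. -/
structure LPP1Model where
  U : Type
  ne : Nonempty U
  Ww : U → Set U
  Hw : U → Set (Set U)
  μw : U → Set U → ℝ
  v : U → ℕ → Bool

/-- Truth at a world: `M, w ⊨ p` iff `v_w(p) = true`; `¬`, `∧` classical;
`M, w ⊨ P_{≥s} A` iff `μ_w([A]_{M,w}) ≥ s`, where `[A]_{M,w} = {u ∈ W_w | M, u ⊨ A}`. -/
def LPP1Form.sat (M : LPP1Model) : LPP1Form → M.U → Prop
  | .atom p, w => M.v w p = true
  | .neg A, w => ¬ LPP1Form.sat M A w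
  | .conj A B, w => LPP1Form.sat M A w ∧ LPP1Form.sat M B w
  | .geq s A, w => (s.1 : ℝ) ≤ M.μw w {u ∈ M.Ww w | LPP1Form.sat M A u}

/-- `[A]_{M,w} = {u ∈ W_w | M, u ⊨ A}`. -/
def LPP1Model.truthSet (M : LPP1Model) (A : LPP1Form) (w : M.U) : Set M.U :=
  {u ∈ M.Ww w | LPP1Form.sat M A u}

/-- `M` is an LPP1-model: for every world `w`, `⟨W_w, H_w, μ_w⟩` is a probability
space (`H_w` a σ-algebra over `W_w`, `μ_w : H_w → [0,1]` σ-additive with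
`μ_w(W_w) = 1`), and `[A]_{M,w} ∈ H_w` for every formula `A` and world `w`. -/
structure IsLPP1Model (M : LPP1Model) : Prop where
  mem_sub : ∀ w : M.U, ∀ V ∈ M.Hw w, V ⊆ M.Ww w
  top_mem : ∀ w : M.U, M.Ww w ∈ M.Hw w
  compl_mem : ∀ w : M.U, ∀ V ∈ M.Hw w, M.Ww w \ V ∈ M.Hw w
  iUnion_mem : ∀ (w : M.U) (f : ℕ → Set M.U),
    (∀ k, f k ∈ M.Hw w) → (⋃ k, f k) ∈ M.Hw w
  nonneg : ∀ w : M.U, ∀ V ∈ M.Hw w, 0 ≤ M.μw w V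
  le_one : ∀ w : M.U, ∀ V ∈ M.Hw w, M.μw w V ≤ 1
  total : ∀ w : M.U, M.μw w (M.Ww w) = 1
  sigma_additive : ∀ (w : M.U) (f : ℕ → Set M.U), (∀ k, f k ∈ M.Hw w) →
    Pairwise (Function.onFun Disjoint f) →
    HasSum (fun k => M.μw w (f k)) (M.μw w (⋃ k, f k))
  meas : ∀ (A : LPP1Form) (w : M.U), M.truthSet A w ∈ M.Hw w

/-- The number of symbols of an LPP1 formula, each probabilistic operator
counting as one symbol. -/
def LPP1Form.size : LPP1Form → ℕ
  | .atom _ => 1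
  | .neg A => A.size + 1
  | .conj A B => A.size + B.size + 1
  | .geq _ A => A.size + 1

noncomputable section
open Classical

namespace SMPaux

/-- The list of subformulas of an LPP1 formula. -/
def subs : LPP1Form → List LPP1Form
  | .atom p => [.atom p]
  | .neg B => .neg B :: subs B
  | .conj B C => .conj B C :: (subs B ++ subs C)
  | .geq s B => .geq s B :: subs B

lemma self_mem_subs : ∀ B : LPP1Form, B ∈ subs B := by
  intro B; cases B <;> simp [subs]

lemma subs_subset : ∀ {C B : LPP1Form}, B ∈ subs C → ∀ x ∈ subs B, x ∈ subs C := by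
  intro C
  induction C with
  | atom p =>
      intro B h; simp [subs] at h; subst h; simp [subs]
  | neg D ih =>
      intro B h
      rcases List.mem_cons.1 h with h | h
      · subst h; exact fun x hx => hx
      · exact fun x hx => List.mem_cons_of_mem _ (ih h x hx)
  | conj D E ihD ihE =>
      intro B h
      rcases List.mem_cons.1 h with h | h
      · subst h; exact fun x hx => hx
      · rcases List.mem_append.1 h with h | h
        · exact fun x hx => List.mem_cons_of_mem _ (List.mem_append.2 (Or.inl (ihD h x hx)))
        · exact fun x hx => List.mem_cons_of_mem _ (List.mem_append.2 (Or.inr (ihE h x hx)))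
  | geq s D ih =>
      intro B h
      rcases List.mem_cons.1 h with h | h
      · subst h; exact fun x hx => hx
      · exact fun x hx => List.mem_cons_of_mem _ (ih h x hx)

lemma subs_length : ∀ B : LPP1Form, (subs B).length ≤ B.size := by
  intro B
  induction B with
  | atom p => simp [subs, LPP1Form.size]
  | neg D ih => simp [subs, LPP1Form.size]; omega
  | conj D E ihD ihE => simp [subs, LPP1Form.size]; omega
  | geq s D ih => simp [subs, LPP1Form.size]; omega

variable (M : LPP1Model) (A : LPP1Form)

/-- The profile of a world: the truth values of all subformulas of `A`. -/
def g (u : M.U) : Fin (subs A).length → Bool :=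
  fun i => decide (LPP1Form.sat M ((subs A).get i) u)

/-- The worlds of the small model: realized profiles. -/
def SmallU : Type := {x : Fin (subs A).length → Bool // x ∈ Set.range (g M A)}

instance : Finite (SmallU M A) := by
  unfold SmallU; infer_instance

instance : Fintype (SmallU M A) := Fintype.ofFinite _

/-- A representative world with a given realized profile. -/
def rep (x : SmallU M A) : M.U := x.2.choose

lemma g_rep (x : SmallU M A) : g M A (rep M A x) = x.1 := x.2.choose_spec

/-- The class of a world. -/
def cls (u : M.U) : SmallU M A := ⟨g M A u, ⟨u, rfl⟩⟩

/-- The set of worlds in `W_w` with profile `x`. -/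
def pSet (w : M.U) (x : SmallU M A) : Set M.U := {u ∈ M.Ww w | g M A u = x.1}

/-- The pullback of a set of profiles. -/
def pull (w : M.U) (V : Set (SmallU M A)) : Set M.U := {u ∈ M.Ww w | cls M A u ∈ V}

/-- The measure of the small model. -/
def mu' (x : SmallU M A) (V : Set (SmallU M A)) : ℝ :=
  ∑ y : SmallU M A, if y ∈ V then M.μw (rep M A x) (pSet M A (rep M A x) y) else 0

/-- The small model. -/
def smallModel : LPP1Model where
  U := SmallU M A
  ne := ⟨cls M A (Classical.choice M.ne)⟩
  Ww := fun _ => Set.univ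
  Hw := fun _ => Set.univ
  μw := mu' M A
  v := fun x p => M.v (rep M A x) p

variable {M}

lemma empty_mem (hM : IsLPP1Model M) (w : M.U) : (∅ : Set M.U) ∈ M.Hw w := by
  have := hM.compl_mem w _ (hM.top_mem w); simpa using this

lemma mu_empty (hM : IsLPP1Model M) (w : M.U) : M.μw w (∅ : Set M.U) = 0 := by
  have h := hM.sigma_additive w (fun _ => ∅) (fun _ => empty_mem hM w)
    (fun i j _ => by simp [Function.onFun])
  simp only [Set.iUnion_empty] at h
  exact (tendsto_nhds_unique h.summable.tendsto_atTop_zero tendsto_const_nhds).symm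

lemma union_mem (hM : IsLPP1Model M) (w : M.U) {V V' : Set M.U}
    (h : V ∈ M.Hw w) (h' : V' ∈ M.Hw w) : V ∪ V' ∈ M.Hw w := by
  have hU : (⋃ k, (fun k => if k = 0 then V else if k = 1 then V' else (∅ : Set M.U)) k)
      = V ∪ V' := by
    ext u
    simp only [Set.mem_iUnion, Set.mem_union]
    constructor
    · rintro ⟨k, hk⟩
      rcases k with _ | _ | k <;> simp_all
    · rintro (hu | hu)
      · exact ⟨0, by simpa⟩
      · exact ⟨1, by simpa⟩
  have := hM.iUnion_mem w (fun k => if k = 0 then V else if k = 1 then V' else ∅)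
    (fun k => by rcases k with _ | _ | k <;> simp [h, h', empty_mem hM w])
  rwa [hU] at this

lemma mu_union (hM : IsLPP1Model M) (w : M.U) {V V' : Set M.U}
    (h : V ∈ M.Hw w) (h' : V' ∈ M.Hw w) (hd : Disjoint V V') :
    M.μw w (V ∪ V') = M.μw w V + M.μw w V' := by
  set f : ℕ → Set M.U := fun k => if k = 0 then V else if k = 1 then V' else ∅ with hf
  have hU : (⋃ k, f k) = V ∪ V' := by
    ext u
    simp only [hf, Set.mem_iUnion, Set.mem_union]
    constructor
    · rintro ⟨k, hk⟩
      rcases k with _ | _ | k <;> simp_all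
    · rintro (hu | hu)
      · exact ⟨0, by simpa⟩
      · exact ⟨1, by simpa⟩
  have hs := hM.sigma_additive w f
    (fun k => by rcases k with _ | _ | k <;> simp [hf, h, h', empty_mem hM w])
    (by
      intro i j hij
      unfold Function.onFun
      simp only [hf]
      rcases i with _ | _ | i <;> rcases j with _ | _ | j <;>
        first
          | exact absurd rfl hij
          | simp [hd, hd.symm, Set.disjoint_empty, Set.empty_disjoint])
  rw [hU] at hs
  have hz : ∀ k ∉ ({0, 1} : Finset ℕ), M.μw w (f k) = 0 := by
    intro k hk
    have hke : f k = ∅ := by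
      simp only [hf]
      rcases k with _ | _ | k
      · simp at hk
      · simp at hk
      · simp
    rw [hke, mu_empty hM w]
  have hfin : HasSum (fun k => M.μw w (f k)) (∑ k ∈ ({0, 1} : Finset ℕ), M.μw w (f k)) :=
    hasSum_sum_of_ne_finset_zero hz
  have : (∑ k ∈ ({0, 1} : Finset ℕ), M.μw w (f k)) = M.μw w V + M.μw w V' := by
    simp [hf]
  rw [this] at hfin
  exact hs.unique hfin

lemma inter_mem (hM : IsLPP1Model M) (w : M.U) {V V' : Set M.U}
    (h : V ∈ M.Hw w) (h' : V' ∈ M.Hw w) : V ∩ V' ∈ M.Hw w := by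
  have hsub1 := hM.mem_sub w V h
  have hsub2 := hM.mem_sub w V' h'
  have hint : V ∩ V' = M.Ww w \ ((M.Ww w \ V) ∪ (M.Ww w \ V')) := by
    ext u
    simp only [Set.mem_inter_iff, Set.mem_diff, Set.mem_union]
    have e1 := @hsub1 u
    have e2 := @hsub2 u
    tauto
  rw [hint]
  exact hM.compl_mem w _ (union_mem hM w (hM.compl_mem w _ h) (hM.compl_mem w _ h'))

lemma finUnion_mem (hM : IsLPP1Model M) (w : M.U) {ι : Type} (S : ι → Set M.U) :
    ∀ s : Finset ι, (∀ y ∈ s, S y ∈ M.Hw w) → (⋃ y ∈ s, S y) ∈ M.Hw w := by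
  intro s
  induction s using Finset.induction_on with
  | empty => intro _; simpa using empty_mem hM w
  | @insert a s ha ih =>
      intro h
      rw [Finset.set_biUnion_insert]
      exact union_mem hM w (h a (Finset.mem_insert_self a s))
        (ih fun y hy => h y (Finset.mem_insert_of_mem hy))

lemma mu_finUnion (hM : IsLPP1Model M) (w : M.U) {ι : Type} (S : ι → Set M.U) :
    ∀ s : Finset ι, (∀ y ∈ s, S y ∈ M.Hw w) →
      (∀ y ∈ s, ∀ z ∈ s, y ≠ z → Disjoint (S y) (S z)) →
      M.μw w (⋃ y ∈ s, S y) = ∑ y ∈ s, M.μw w (S y) := by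
  intro s
  induction s using Finset.induction_on with
  | empty => intro _ _; simpa using mu_empty hM w
  | @insert a s ha ih =>
      intro h hd
      rw [Finset.set_biUnion_insert, Finset.sum_insert ha]
      have hmem : (⋃ y ∈ s, S y) ∈ M.Hw w :=
        finUnion_mem hM w S s fun y hy => h y (Finset.mem_insert_of_mem hy)
      have hdis : Disjoint (S a) (⋃ y ∈ s, S y) := by
        simp only [Set.disjoint_iUnion_right]
        intro y hy
        exact hd a (Finset.mem_insert_self a s) y (Finset.mem_insert_of_mem hy)
          (fun hc => ha (hc ▸ hy))
      rw [mu_union hM w (h a (Finset.mem_insert_self a s)) hmem hdis,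
        ih (fun y hy => h y (Finset.mem_insert_of_mem hy))
          (fun y hy z hz => hd y (Finset.mem_insert_of_mem hy) z (Finset.mem_insert_of_mem hz))]

variable {A}

lemma pSet_mem (hM : IsLPP1Model M) (w : M.U) (x : SmallU M A) :
    pSet M A w x ∈ M.Hw w := by
  have key : ∀ m : ℕ,
      {u ∈ M.Ww w | ∀ i : Fin (subs A).length, (i : ℕ) < m → g M A u i = x.1 i} ∈ M.Hw w := by
    intro m
    induction m with
    | zero => simpa using hM.top_mem w
    | succ m ih =>
        by_cases hm : m < (subs A).length
        · have hset : {u ∈ M.Ww w | ∀ i : Fin (subs A).length, (i : ℕ) < m + 1 → g M A u i = x.1 i}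
              = {u ∈ M.Ww w | ∀ i : Fin (subs A).length, (i : ℕ) < m → g M A u i = x.1 i}
                ∩ (if x.1 ⟨m, hm⟩ = true then M.truthSet ((subs A).get ⟨m, hm⟩) w
                   else M.Ww w \ M.truthSet ((subs A).get ⟨m, hm⟩) w) := by
            ext u
            by_cases hx : x.1 ⟨m, hm⟩ = true <;>
              simp only [hx, if_pos, if_neg, Set.mem_inter_iff, Set.mem_setOf_eq,
                Set.mem_diff, LPP1Model.truthSet, if_true, Bool.not_eq_true] <;>
              constructor
            · rintro ⟨hu, hall⟩
              refine ⟨⟨hu, fun i hi => hall i (by omega)⟩, hu, ?_⟩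
              have := hall ⟨m, hm⟩ (by simp)
              rw [hx] at this
              simpa [g] using this
            · rintro ⟨⟨hu, hall⟩, _, hsat⟩
              refine ⟨hu, fun i hi => ?_⟩
              rcases Nat.lt_succ_iff_lt_or_eq.1 hi with hi | hi
              · exact hall i hi
              · have : i = ⟨m, hm⟩ := Fin.ext hi
                subst this
                rw [hx]
                simpa [g] using hsat
            · rintro ⟨hu, hall⟩
              refine ⟨⟨hu, fun i hi => hall i (by omega)⟩, hu, fun hc => ?_⟩
              have h1 := hall ⟨m, hm⟩ (by simp)
              simp only [g] at h1
              rw [decide_eq_true hc.2] at h1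
              exact hx h1.symm
            · rintro ⟨⟨hu, hall⟩, _, hsat⟩
              refine ⟨hu, fun i hi => ?_⟩
              rcases Nat.lt_succ_iff_lt_or_eq.1 hi with hi | hi
              · exact hall i hi
              · have : i = ⟨m, hm⟩ := Fin.ext hi
                subst this
                have hxf : x.1 ⟨m, hm⟩ = false := by
                  cases hb : x.1 ⟨m, hm⟩
                  · rfl
                  · exact absurd hb hx
                rw [hxf]
                simp only [g, decide_eq_false_iff_not]
                exact fun hc => hsat ⟨hu, hc⟩
          rw [hset]
          have hT : (if x.1 ⟨m, hm⟩ = true then M.truthSet ((subs A).get ⟨m, hm⟩) w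
              else M.Ww w \ M.truthSet ((subs A).get ⟨m, hm⟩) w) ∈ M.Hw w := by
            by_cases hx : x.1 ⟨m, hm⟩ = true
            · rw [if_pos hx]; exact hM.meas _ w
            · rw [if_neg hx]; exact hM.compl_mem w _ (hM.meas _ w)
          exact inter_mem hM w ih hT
        · have hset : {u ∈ M.Ww w | ∀ i : Fin (subs A).length, (i : ℕ) < m + 1 → g M A u i = x.1 i}
              = {u ∈ M.Ww w | ∀ i : Fin (subs A).length, (i : ℕ) < m → g M A u i = x.1 i} := by
            ext u
            simp only [Set.mem_setOf_eq]
            constructor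
            · rintro ⟨hu, hall⟩; exact ⟨hu, fun i hi => hall i (by omega)⟩
            · rintro ⟨hu, hall⟩
              refine ⟨hu, fun i hi => hall i ?_⟩
              have := i.isLt; omega
          rw [hset]; exact ih
  have : pSet M A w x
      = {u ∈ M.Ww w | ∀ i : Fin (subs A).length, (i : ℕ) < (subs A).length → g M A u i = x.1 i} := by
    ext u
    simp only [pSet, Set.mem_setOf_eq, funext_iff]
    exact ⟨fun ⟨hu, h⟩ => ⟨hu, fun i _ => h i⟩, fun ⟨hu, h⟩ => ⟨hu, fun i => h i i.isLt⟩⟩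
  rw [this]; exact key _

lemma pSet_disjoint (w : M.U) {x y : SmallU M A} (hxy : x ≠ y) :
    Disjoint (pSet M A w x) (pSet M A w y) := by
  rw [Set.disjoint_left]
  rintro u ⟨_, h1⟩ ⟨_, h2⟩
  exact hxy (Subtype.ext (h1 ▸ h2 ▸ rfl))

lemma pull_eq (w : M.U) (V : Set (SmallU M A)) :
    pull M A w V = ⋃ y ∈ (Set.toFinite V).toFinset, pSet M A w y := by
  ext u
  simp only [pull, Set.mem_setOf_eq, Set.mem_iUnion, Set.Finite.mem_toFinset, pSet]
  constructor
  · rintro ⟨hu, hV⟩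
    exact ⟨cls M A u, hV, hu, rfl⟩
  · rintro ⟨y, hy, hu, hg⟩
    have : cls M A u = y := Subtype.ext hg
    exact ⟨hu, this ▸ hy⟩

lemma pull_mem (hM : IsLPP1Model M) (w : M.U) (V : Set (SmallU M A)) :
    pull M A w V ∈ M.Hw w := by
  rw [pull_eq]
  exact finUnion_mem hM w _ _ (fun y _ => pSet_mem hM w y)

lemma mu'_sum (x : SmallU M A) (V : Set (SmallU M A)) :
    mu' M A x V = ∑ y ∈ (Set.toFinite V).toFinset, M.μw (rep M A x) (pSet M A (rep M A x) y) := by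
  unfold mu'
  rw [← Finset.sum_subset (Finset.subset_univ (Set.toFinite V).toFinset)
      (fun y _ hy => if_neg fun hc => hy ((Set.Finite.mem_toFinset _).2 hc))]
  exact Finset.sum_congr rfl fun y hy => if_pos ((Set.Finite.mem_toFinset _).1 hy)

lemma mu'_eq (hM : IsLPP1Model M) (x : SmallU M A) (V : Set (SmallU M A)) :
    mu' M A x V = M.μw (rep M A x) (pull M A (rep M A x) V) := by
  rw [mu'_sum, pull_eq,
    mu_finUnion hM (rep M A x) _ _ (fun y _ => pSet_mem hM (rep M A x) y)
      (fun y _ z _ hyz => pSet_disjoint (rep M A x) hyz)]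

lemma pull_univ (w : M.U) : pull M A w (Set.univ : Set (SmallU M A)) = M.Ww w := by
  ext u; simp [pull]

lemma mu'_nonneg (hM : IsLPP1Model M) (x : SmallU M A) (V : Set (SmallU M A)) :
    0 ≤ mu' M A x V := by
  unfold mu'
  apply Finset.sum_nonneg
  intro y _
  by_cases hy : y ∈ V
  · rw [if_pos hy]; exact hM.nonneg _ _ (pSet_mem hM _ y)
  · rw [if_neg hy]

lemma mu'_univ (hM : IsLPP1Model M) (x : SmallU M A) :
    mu' M A x (Set.univ : Set (SmallU M A)) = 1 := by
  rw [mu'_eq hM, pull_univ]; exact hM.total _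

lemma mu'_le_one (hM : IsLPP1Model M) (x : SmallU M A) (V : Set (SmallU M A)) :
    mu' M A x V ≤ 1 := by
  rw [← mu'_univ hM x]
  unfold mu'
  apply Finset.sum_le_sum
  intro y _
  by_cases hy : y ∈ V
  · simp only [if_pos hy, Set.mem_univ, if_true]
    exact le_rfl
  · rw [if_neg hy]
    simp only [Set.mem_univ, if_true]
    exact hM.nonneg _ _ (pSet_mem hM _ y)

lemma mu'_singleton (hM : IsLPP1Model M) (x y : SmallU M A) :
    mu' M A x {y} = M.μw (rep M A x) (pSet M A (rep M A x) y) := by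
  unfold mu'
  rw [Finset.sum_eq_single y]
  · simp
  · intro b _ hb
    rw [if_neg (by simpa using hb)]
  · intro h
    exact absurd (Finset.mem_univ y) h

lemma mu'_finsum (hM : IsLPP1Model M) (x : SmallU M A) (V : Set (SmallU M A)) :
    mu' M A x V = ∑ᶠ u ∈ V, mu' M A x {u} := by
  have : V = ((Set.toFinite V).toFinset : Set (SmallU M A)) :=
    (Set.Finite.coe_toFinset _).symm
  rw [mu'_sum]
  conv_rhs => rw [this]
  rw [finsum_mem_coe_finset]
  exact Finset.sum_congr rfl fun y _ => (mu'_singleton hM x y).symm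

lemma same_profile {u1 u2 : M.U} (h : g M A u1 = g M A u2) {B : LPP1Form}
    (hB : B ∈ subs A) : LPP1Form.sat M B u1 ↔ LPP1Form.sat M B u2 := by
  obtain ⟨i, hi⟩ := List.get_of_mem hB
  have := congrFun h i
  simp only [g, hi] at this
  exact decide_eq_decide.mp this

lemma sat_transfer (hM : IsLPP1Model M) :
    ∀ B, B ∈ subs A → ∀ u : M.U,
      (LPP1Form.sat (smallModel M A) B (cls M A u) ↔ LPP1Form.sat M B u) := by
  intro B
  induction B with
  | atom p =>
      intro hB u
      simp only [LPP1Form.sat, smallModel]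
      have hg : g M A (rep M A (cls M A u)) = g M A u := g_rep M A (cls M A u)
      exact same_profile hg hB
  | neg D ih =>
      intro hB u
      have hD : D ∈ subs A := subs_subset hB D (List.mem_cons_of_mem _ (self_mem_subs D))
      simp only [LPP1Form.sat]
      rw [ih hD u]
  | conj D E ihD ihE =>
      intro hB u
      have hD : D ∈ subs A := subs_subset hB D
        (List.mem_cons_of_mem _ (List.mem_append.2 (Or.inl (self_mem_subs D))))
      have hE : E ∈ subs A := subs_subset hB E
        (List.mem_cons_of_mem _ (List.mem_append.2 (Or.inr (self_mem_subs E))))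
      simp only [LPP1Form.sat]
      rw [ihD hD u, ihE hE u]
  | geq s D ih =>
      intro hB u
      have hD : D ∈ subs A := subs_subset hB D (List.mem_cons_of_mem _ (self_mem_subs D))
      set w0 := rep M A (cls M A u) with hw0
      have hg : g M A w0 = g M A u := g_rep M A (cls M A u)
      have heq : LPP1Form.sat (smallModel M A) (.geq s D) (cls M A u)
          ↔ (s.1 : ℝ) ≤ mu' M A (cls M A u)
              {y | LPP1Form.sat (smallModel M A) D y} := by
        simp only [LPP1Form.sat, smallModel]
        constructor <;> intro h <;> convert h using 2 <;> ext y <;> simp <;> exact fun _ => Set.mem_univ _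
      rw [heq, mu'_eq hM]
      have hpull : pull M A w0 {y | LPP1Form.sat (smallModel M A) D y}
          = M.truthSet D w0 := by
        ext u'
        simp only [pull, Set.mem_setOf_eq, LPP1Model.truthSet]
        constructor
        · rintro ⟨hu', hs⟩
          exact ⟨hu', (ih hD u').mp hs⟩
        · rintro ⟨hu', hs⟩
          exact ⟨hu', (ih hD u').mpr hs⟩
      rw [hpull]
      have : ((s.1 : ℝ) ≤ M.μw w0 (M.truthSet D w0)) ↔ LPP1Form.sat M (.geq s D) w0 := by
        simp only [LPP1Form.sat, LPP1Model.truthSet]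
      rw [this]
      exact same_profile hg hB

lemma card_small : Nat.card (SmallU M A) ≤ 2 ^ A.size := by
  have h1 : Nat.card (SmallU M A) ≤ Nat.card (Fin (subs A).length → Bool) :=
    Nat.card_le_card_of_injective Subtype.val Subtype.val_injective
  have h2 : Nat.card (Fin (subs A).length → Bool) = 2 ^ (subs A).length := by
    simp [Nat.card_eq_fintype_card]
  calc Nat.card (SmallU M A) ≤ 2 ^ (subs A).length := h2 ▸ h1
    _ ≤ 2 ^ A.size := Nat.pow_le_pow_right (by norm_num) (subs_length A)

lemma smallModel_isModel (hM : IsLPP1Model M) : IsLPP1Model (smallModel M A) := by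
  constructor
  · intro w V _; simp [smallModel]; exact Set.subset_univ _
  · intro w; simp [smallModel]; exact Set.mem_univ _
  · intro w V _; simp [smallModel]; exact Set.mem_univ _
  · intro w f _; simp [smallModel]; exact Set.mem_univ _
  · intro w V _; exact mu'_nonneg hM w V
  · intro w V _; exact mu'_le_one hM w V
  · intro w; exact mu'_univ hM w
  · intro w f _ hd
    have heq : ∀ k, (smallModel M A).μw w (f k)
        = M.μw (rep M A w) (pull M A (rep M A w) (f k)) := fun k => mu'_eq hM w (f k)
    have hU : pull M A (rep M A w) (⋃ k, f k) = ⋃ k, pull M A (rep M A w) (f k) := by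
      ext u; simp only [pull, Set.mem_setOf_eq, Set.mem_iUnion]
      exact ⟨fun ⟨h1, h2⟩ => (Set.mem_iUnion.mp h2).imp fun k hk => ⟨h1, hk⟩,
        fun ⟨k, h1, hk⟩ => ⟨h1, Set.mem_iUnion.mpr ⟨k, hk⟩⟩⟩
    have htot : (smallModel M A).μw w (⋃ k, f k)
        = M.μw (rep M A w) (⋃ k, pull M A (rep M A w) (f k)) := by
      rw [show (smallModel M A).μw w (⋃ k, f k) = mu' M A w (⋃ k, f k) from rfl]
      exact (mu'_eq hM w (⋃ k, f k)).trans (congrArg (M.μw (rep M A w)) hU)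
    rw [htot]
    have := hM.sigma_additive (rep M A w) (fun k => pull M A (rep M A w) (f k))
      (fun k => pull_mem hM _ _)
      (by
        intro i j hij
        unfold Function.onFun
        rw [Set.disjoint_left]
        rintro u ⟨_, h1⟩ ⟨_, h2⟩
        exact absurd h2 (Set.disjoint_left.mp (hd hij) h1))
    convert this using 1
    funext k
    exact heq k
  · intro B w; simp [smallModel]; exact Set.mem_univ _

end SMPaux

end

/-- **Small model property for LPP1.**
If an LPP1 formula `A` is satisfiable (there are an LPP1-model `M` and a world `w`
with `M, w ⊨ A`), then `A` is satisfiable in an LPP1-model `M = ⟨U, W, H, μ, v⟩`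
such that:
(1) `|U| ≤ 2^{|A|}`;
(2) for each `w ∈ U`, `W_w = U` and `H_w = 𝒫(U)`;
(3) for each `w ∈ U` and every `V ⊆ U`, `μ_w(V) = Σ_{u ∈ V} μ_w({u})`. -/

theorem lpp1_small_model_property (A : LPP1Form)
    (hsat : ∃ M : LPP1Model, IsLPP1Model M ∧ ∃ w : M.U, LPP1Form.sat M A w) :
    ∃ M : LPP1Model, IsLPP1Model M ∧ (∃ w : M.U, LPP1Form.sat M A w) ∧
      (Finite M.U ∧ Nat.card M.U ≤ 2 ^ A.size) ∧
      (∀ w : M.U, M.Ww w = Set.univ ∧ M.Hw w = Set.univ) ∧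
      (∀ (w : M.U) (V : Set M.U), M.μw w V = ∑ᶠ u ∈ V, M.μw w {u}) := by
  obtain ⟨M, hM, w, hw⟩ := hsat
  refine ⟨SMPaux.smallModel M A, SMPaux.smallModel_isModel hM, ⟨SMPaux.cls M A w, ?_⟩,
    ⟨?_, SMPaux.card_small⟩, fun w' => ⟨rfl, rfl⟩, fun w' V => SMPaux.mu'_finsum hM w' V⟩
  · exact (SMPaux.sat_transfer hM A (SMPaux.self_mem_subs A) w).mpr hw
  · exact inferInstanceAs (Finite (SMPaux.SmallU M A))
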